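/- arXiv:2508.00156 — 2 statements merged into one kernel-verified Lean document; each statement's English description precedes it below -/
import Mathlib

section
/- Let β be the bearing angle from pᵢ to pⱼ, i.e., (cos β, sin β) = (pⱼ − pᵢ)/‖pⱼ − pᵢ‖, and let Δ = arccos(min(1, α·h/(4v‖pᵢ − pⱼ‖))) with h = ‖pᵢ − pⱼ‖² − r² ≥ 0. Then the CBF condition g(pᵢ, pⱼ, θ) = (α/2)h + 2v⟨pᵢ − pⱼ, (cos θ, sin θ)⟩ ≥ 0 holds if and only if |∠(θ − β)| ≥ Δ (with equality allowed). -/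
/-- Angular normalization into `[−π, π)`. -/
noncomputable def angNorm (a : ℝ) : ℝ :=
  toIcoMod Real.two_pi_pos 0 (a + Real.pi) - Real.pi

open Real in
lemma arccos_antitone : Antitone Real.arccos := fun x y h => by
  simp only [Real.arccos]
  have := Real.monotone_arcsin h
  linarith

open Real in
lemma cos_angNorm (x : ℝ) : Real.cos (angNorm x) = Real.cos x := by
  unfold angNorm toIcoMod
  have : x + π - toIcoDiv Real.two_pi_pos 0 (x + π) • (2 * π) - π
      = x - (toIcoDiv Real.two_pi_pos 0 (x + π) : ℝ) * (2 * π) := by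
    push_cast [zsmul_eq_mul]; ring
  rw [this, Real.cos_sub_int_mul_two_pi]

open Real in
lemma abs_angNorm_le_pi (x : ℝ) : |angNorm x| ≤ π := by
  have h := toIcoMod_mem_Ico' Real.two_pi_pos (x + π)
  obtain ⟨h1, h2⟩ := h
  unfold angNorm
  rw [abs_le]
  constructor <;> [linarith; linarith]

open Real in
/-- The decentralized CBF condition `g(pᵢ, pⱼ, θ) ≥ 0` holds iff the heading
deviates from the bearing angle `β` by at least
`Δ = arccos (min 1 (α h / (4 v ‖pᵢ − pⱼ‖)))`. -/
theorem cbf_condition_iff_angle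
    (v α r : ℝ) (hv : 0 < v) (hα : 0 < α) (hr : 0 < r)
    (pi pj : ℝ × ℝ) (hne : pi ≠ pj) (hsep : r ≤ ‖pi - pj‖)
    (θ β : ℝ)
    (hβ : (cos β, sin β) = ‖pj - pi‖⁻¹ • (pj - pi)) :
    0 ≤ α / 2 * (‖pi - pj‖ ^ 2 - r ^ 2)
        + 2 * v * ((pi.1 - pj.1) * cos θ + (pi.2 - pj.2) * sin θ)
    ↔ arccos (min 1 (α * (‖pi - pj‖ ^ 2 - r ^ 2) / (4 * v * ‖pi - pj‖)))
        ≤ |angNorm (θ - β)| := by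
  set d := ‖pi - pj‖ with hd_def
  have hd : 0 < d := lt_of_lt_of_le hr hsep
  have hdji : ‖pj - pi‖ = d := norm_sub_rev pj pi
  have hcosβ : cos β = d⁻¹ * (pj.1 - pi.1) := by
    have := congrArg Prod.fst hβ
    simpa [hdji] using this
  have hsinβ : sin β = d⁻¹ * (pj.2 - pi.2) := by
    have := congrArg Prod.snd hβ
    simpa [hdji] using this
  -- inner product identity
  have hip : (pi.1 - pj.1) * cos θ + (pi.2 - pj.2) * sin θ = -(d * cos (θ - β)) := by
    rw [Real.cos_sub, hcosβ, hsinβ]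
    field_simp
    ring
  set h := d ^ 2 - r ^ 2 with hh_def
  have hh : 0 ≤ h := by nlinarith
  set c := α * h / (4 * v * d) with hc_def
  have hc0 : 0 ≤ c := by positivity
  -- condition ↔ cos (θ - β) ≤ c
  have step1 : (0 ≤ α / 2 * h + 2 * v * ((pi.1 - pj.1) * cos θ + (pi.2 - pj.2) * sin θ))
      ↔ cos (θ - β) ≤ c := by
    rw [hip, hc_def, le_div_iff₀ (by positivity : (0:ℝ) < 4 * v * d)]
    constructor <;> intro hx <;> nlinarith
  rw [step1]
  -- angle side
  set y := |angNorm (θ - β)| with hy_def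
  have hy0 : 0 ≤ y := abs_nonneg _
  have hyπ : y ≤ π := abs_angNorm_le_pi _
  have hcy : cos y = cos (θ - β) := by
    rw [hy_def, Real.cos_abs, cos_angNorm]
  set m := min 1 c with hm_def
  have hm1 : m ≤ 1 := min_le_left _ _
  have hm0 : -1 ≤ m := le_min (by norm_num) (by linarith)
  constructor
  · intro hx
    have hle : cos y ≤ m := le_min (Real.cos_le_one y) (by rw [hcy]; exact hx)
    calc arccos m ≤ arccos (cos y) := arccos_antitone hle
      _ = y := Real.arccos_cos hy0 hyπ
  · intro hx
    have : cos y ≤ cos (arccos m) :=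
      Real.cos_le_cos_of_nonneg_of_le_pi (Real.arccos_nonneg m) hyπ hx
    rw [Real.cos_arccos hm0 hm1] at this
    rw [← hcy]
    exact le_trans this (min_le_right _ _)
end

section
/- The minimizer of (1/2)|θˢ − θ*|² subject to the constraint |∠(θˢ − β)| ≥ Δ (where Δ ∈ [0, π/2]) is: θˢ = θ* if |∠(θ* − β)| ≥ Δ; θˢ = β − Δ if ∠(θ* − β) ∈ (−Δ, 0); and θˢ = β + Δ if ∠(θ* − β) ∈ [0, Δ) (choosing β + Δ at the tie ∠(θ* − β) = 0), where distance is measured modulo 2π. -/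
lemma angNorm_mem (a : ℝ) : angNorm a ∈ Set.Ico (-Real.pi) Real.pi := by
  have h := toIcoMod_mem_Ico Real.two_pi_pos 0 (a + Real.pi)
  simp only [Set.mem_Ico, zero_add] at h
  constructor <;> [skip; skip] <;> unfold angNorm <;> nlinarith [h.1, h.2]

lemma angNorm_eq_self {a : ℝ} (h1 : -Real.pi ≤ a) (h2 : a < Real.pi) : angNorm a = a := by
  unfold angNorm
  rw [(toIcoMod_eq_self Real.two_pi_pos).2 (by constructor <;> [linarith; linarith])]
  ring

lemma coe_angNorm (a : ℝ) : ((angNorm a : ℝ) : Real.Angle) = (a : Real.Angle) := by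
  unfold angNorm
  rw [Real.Angle.coe_sub, Real.Angle.coe_toIcoMod, ← Real.Angle.coe_sub]
  congr 1
  ring

lemma norm_coe_of_abs_le {x : ℝ} (h : |x| ≤ Real.pi) : ‖(x : Real.Angle)‖ = |x| := by
  have h2 : (2 : ℝ) * Real.pi ≠ 0 := by positivity
  have := (AddCircle.norm_coe_eq_abs_iff (2 * Real.pi) (x := x) h2).2
    (by rw [abs_of_pos Real.two_pi_pos]; linarith)
  exact this

lemma abs_angNorm_eq_norm (a : ℝ) : |angNorm a| = ‖(a : Real.Angle)‖ := by
  have hm := angNorm_mem a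
  rw [← coe_angNorm a, norm_coe_of_abs_le]
  rw [abs_le]
  exact ⟨hm.1, hm.2.le⟩

/-- Explicit solution of the safety filter: the minimizer of the angular
distance to `θ*` subject to the safety constraint `|∠(θˢ − β)| ≥ Δ` is `θ*`
itself if it is safe, and otherwise the nearer of `β ± Δ` (choosing `β + Δ`
at the tie `∠(θ* − β) = 0`).  The filtered angle is safe, and it is at least
as close (in angular distance) to `θ*` as any other safe heading. -/
theorem safety_filter_explicit_solution
    (θs θstar β Δ : ℝ) (hΔ : Δ ∈ Set.Icc 0 (Real.pi / 2))
    (hdef : θs =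
      if Δ ≤ |angNorm (θstar - β)| then θstar
      else if angNorm (θstar - β) < 0 then β - Δ
      else β + Δ) :
    Δ ≤ |angNorm (θs - β)| ∧
      ∀ θ : ℝ, Δ ≤ |angNorm (θ - β)| →
        |angNorm (θs - θstar)| ≤ |angNorm (θ - θstar)| := by
  obtain ⟨hΔ0, hΔπ⟩ := hΔ
  have hπ := Real.pi_pos
  set x := angNorm (θstar - β) with hx
  by_cases hsafe : Δ ≤ |x|
  · rw [if_pos hsafe] at hdef
    subst hdef
    refine ⟨hsafe, fun θ hθ => ?_⟩
    have : angNorm (θs - θs) = 0 := by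
      rw [sub_self, angNorm_eq_self (by linarith) hπ]
    rw [this, abs_zero]
    exact abs_nonneg _
  · rw [if_neg hsafe] at hdef
    push_neg at hsafe
    -- key: |angNorm (θs - θstar)| = Δ - |x| and |angNorm (θs - β)| = Δ
    have hxabs : |x| < Δ := hsafe
    have hxlt : x < Δ := (le_abs_self x).trans_lt hxabs
    have hxgt : -Δ < x := by
      have := (neg_abs_le x); linarith [abs_lt.1 hxabs]
    have hkey : |angNorm (θs - θstar)| = Δ - |x| ∧ |angNorm (θs - β)| = Δ := by
      by_cases hneg : x < 0
      · rw [if_pos hneg] at hdef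
        subst hdef
        constructor
        · have hco : ((β - Δ - θstar : ℝ) : Real.Angle) = ((-Δ - x : ℝ) : Real.Angle) := by
            calc ((β - Δ - θstar : ℝ) : Real.Angle)
                = ((-Δ : ℝ) : Real.Angle) - ((θstar - β : ℝ) : Real.Angle) := by
                  rw [← Real.Angle.coe_sub]; congr 1; ring
              _ = ((-Δ : ℝ) : Real.Angle) - ((x : ℝ) : Real.Angle) := by
                  rw [hx, coe_angNorm]
              _ = ((-Δ - x : ℝ) : Real.Angle) := (Real.Angle.coe_sub _ _).symm
          have : |angNorm (β - Δ - θstar)| = ‖((-Δ - x : ℝ) : Real.Angle)‖ := by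
            rw [abs_angNorm_eq_norm, hco]
          rw [this, norm_coe_of_abs_le (by rw [abs_le]; constructor <;> nlinarith),
            abs_of_nonpos (by linarith), abs_of_neg hneg]
          ring
        · rw [show β - Δ - β = -Δ by ring,
            angNorm_eq_self (by linarith) (by linarith), abs_neg, abs_of_nonneg hΔ0]
      · rw [if_neg hneg] at hdef
        subst hdef
        push_neg at hneg
        constructor
        · have hco : ((β + Δ - θstar : ℝ) : Real.Angle) = ((Δ - x : ℝ) : Real.Angle) := by
            calc ((β + Δ - θstar : ℝ) : Real.Angle)
                = ((Δ : ℝ) : Real.Angle) - ((θstar - β : ℝ) : Real.Angle) := by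
                  rw [← Real.Angle.coe_sub]; congr 1; ring
              _ = ((Δ : ℝ) : Real.Angle) - ((x : ℝ) : Real.Angle) := by
                  rw [hx, coe_angNorm]
              _ = ((Δ - x : ℝ) : Real.Angle) := (Real.Angle.coe_sub _ _).symm
          have : |angNorm (β + Δ - θstar)| = ‖((Δ - x : ℝ) : Real.Angle)‖ := by
            rw [abs_angNorm_eq_norm, hco]
          rw [this, norm_coe_of_abs_le (by rw [abs_le]; constructor <;> nlinarith),
            abs_of_nonneg (by linarith), abs_of_nonneg hneg]
        · rw [show β + Δ - β = Δ by ring,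
            angNorm_eq_self (by linarith) (by linarith), abs_of_nonneg hΔ0]
    refine ⟨hkey.2 ▸ le_refl Δ, fun θ hθ => ?_⟩
    rw [hkey.1]
    have h1 : |angNorm (θ - θstar)| = ‖((θ - β : ℝ) : Real.Angle) - ((θstar - β : ℝ) : Real.Angle)‖ := by
      rw [abs_angNorm_eq_norm, ← Real.Angle.coe_sub]
      congr 2
      ring
    rw [h1]
    have h2 : ‖((θ - β : ℝ) : Real.Angle)‖ - ‖((θstar - β : ℝ) : Real.Angle)‖ ≤
        ‖((θ - β : ℝ) : Real.Angle) - ((θstar - β : ℝ) : Real.Angle)‖ :=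
      norm_sub_norm_le _ _
    rw [← abs_angNorm_eq_norm, ← abs_angNorm_eq_norm, ← hx] at h2
    linarith
end
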